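/- Let H₀ be self-adjoint, V bounded self-adjoint, H₁ = H₀ + V, z non-real, R₀ = (H₀ - z)^{-1}, R₁ = (H₁ - z)^{-1}. Then I + V R₀ is invertible and for every m ≥ 1, R₁^m - R₀^m = -(∑_{l=1}^{m} R₀^{l} V R₀^{m-l+1} + ∑_{l=1}^{m-1} (R₁^{l} - R₀^{l}) V R₀^{m-l+1}) (I + V R₀)^{-1}. -/

import Mathlib

/-- `I + V R₀` is invertible and the recursion identity (g10) holds:
`R₁^m - R₀^m = -(∑_{l=1}^m R₀^l V R₀^{m-l+1}
  + ∑_{l=1}^{m-1} (R₁^l - R₀^l) V R₀^{m-l+1}) (I + V R₀)⁻¹`. -/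
theorem stmt6 {H : Type*} [NormedAddCommGroup H] [InnerProductSpace ℂ H] [CompleteSpace H]
    (H₀ V : H →L[ℂ] H) (hH₀ : IsSelfAdjoint H₀) (hV : IsSelfAdjoint V)
    (z : ℂ) (hz : z.im ≠ 0)
    (H₁ R₀ R₁ : H →L[ℂ] H) (hH₁ : H₁ = H₀ + V)
    (hR₀ : R₀ = Ring.inverse (H₀ - z • 1)) (hR₁ : R₁ = Ring.inverse (H₁ - z • 1)) :
    IsUnit (1 + V * R₀) ∧
    ∀ m : ℕ, 1 ≤ m →
      R₁ ^ m - R₀ ^ m =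
        -(((∑ l ∈ Finset.Icc 1 m, R₀ ^ l * V * R₀ ^ (m - l + 1)) +
            ∑ l ∈ Finset.Icc 1 (m - 1), (R₁ ^ l - R₀ ^ l) * V * R₀ ^ (m - l + 1)) *
          Ring.inverse (1 + V * R₀)) := by
  have hH₁sa : IsSelfAdjoint H₁ := hH₁ ▸ hH₀.add hV
  -- units
  have hunit : ∀ (T : H →L[ℂ] H), IsSelfAdjoint T → IsUnit (T - z • 1) := by
    intro T hT
    have hzs : z ∉ spectrum ℂ T := by
      intro hmem
      have := hT.mem_spectrum_eq_re hmem
      apply hz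
      rw [this]
      simp
    have := spectrum.notMem_iff.mp hzs
    have h2 : (algebraMap ℂ (H →L[ℂ] H)) z = z • 1 := Algebra.algebraMap_eq_smul_one z
    rw [h2] at this
    simpa using this.neg
  have u₀ : IsUnit (H₀ - z • 1) := hunit H₀ hH₀
  have u₁ : IsUnit (H₁ - z • 1) := hunit H₁ hH₁sa
  have h₀l : (H₀ - z • 1) * R₀ = 1 := by rw [hR₀, Ring.mul_inverse_cancel _ u₀]
  have h₀r : R₀ * (H₀ - z • 1) = 1 := by rw [hR₀, Ring.inverse_mul_cancel _ u₀]
  have h₁l : (H₁ - z • 1) * R₁ = 1 := by rw [hR₁, Ring.mul_inverse_cancel _ u₁]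
  have h₁r : R₁ * (H₁ - z • 1) = 1 := by rw [hR₁, Ring.inverse_mul_cancel _ u₁]
  -- second resolvent identity
  have res : R₁ - R₀ = -(R₁ * V * R₀) := by
    have e1 : R₁ * (H₀ - z • 1) * R₀ = R₁ := by rw [mul_assoc, h₀l, mul_one]
    have e2 : R₁ * (H₁ - z • 1) * R₀ = R₀ := by rw [h₁r, one_mul]
    have e3 : R₁ * V * R₀ = R₁ * (H₁ - z • 1) * R₀ - R₁ * (H₀ - z • 1) * R₀ := by
      rw [hH₁]; noncomm_ring
    rw [e3, e1, e2]; abel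
  -- 1 + V R₀ is a unit
  have hfac : 1 + V * R₀ = (H₁ - z • 1) * R₀ := by
    rw [hH₁]
    rw [show (H₀ + V - z • 1 : H →L[ℂ] H) = (H₀ - z • 1) + V by abel]
    rw [add_mul, h₀l]
  have huVR : IsUnit (1 + V * R₀) := by
    rw [hfac]; exact u₁.mul (hR₀ ▸ u₀.ringInverse)
  refine ⟨huVR, ?_⟩
  -- telescoping lemma
  have key : ∀ m : ℕ, R₁ ^ m - R₀ ^ m =
      -∑ i ∈ Finset.range m, R₁ ^ (i + 1) * V * R₀ ^ (m - i) := by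
    intro m
    induction m with
    | zero => simp
    | succ m ih =>
      have step : R₁ ^ (m + 1) - R₀ ^ (m + 1)
          = R₁ ^ m * (R₁ - R₀) + (R₁ ^ m - R₀ ^ m) * R₀ := by
        rw [pow_succ, pow_succ]; noncomm_ring
      rw [step, res, ih, Finset.sum_range_succ]
      rw [neg_mul, Finset.sum_mul]
      have hcong : ∀ i ∈ Finset.range m,
          R₁ ^ (i + 1) * V * R₀ ^ (m - i) * R₀ = R₁ ^ (i + 1) * V * R₀ ^ (m + 1 - i) := by
        intro i hi
        have hi' : i < m := Finset.mem_range.mp hi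
        rw [mul_assoc, ← pow_succ, Nat.sub_add_comm hi'.le]
      rw [Finset.sum_congr rfl hcong]
      have hterm : R₁ ^ (m + 1) * V * R₀ ^ (m + 1 - m) = R₁ ^ m * (R₁ * V * R₀) := by
        rw [Nat.add_sub_cancel_left, pow_one, pow_succ]; noncomm_ring
      rw [hterm, mul_neg]
      abel
  intro m hm
  -- convert Icc sums to range sums
  have hIcc : ∀ (f : ℕ → (H →L[ℂ] H)) (n : ℕ),
      ∑ l ∈ Finset.Icc 1 n, f l = ∑ i ∈ Finset.range n, f (i + 1) := by
    intro f n
    rw [← Finset.Ico_add_one_right_eq_Icc, Finset.sum_Ico_eq_sum_range]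
    exact Finset.sum_congr (by simp) fun i _ => by rw [Nat.add_comm]
  -- equation multiplied by (1 + V R₀)
  have main : (R₁ ^ m - R₀ ^ m) * (1 + V * R₀) =
      -(((∑ l ∈ Finset.Icc 1 m, R₀ ^ l * V * R₀ ^ (m - l + 1)) +
          ∑ l ∈ Finset.Icc 1 (m - 1), (R₁ ^ l - R₀ ^ l) * V * R₀ ^ (m - l + 1))) := by
    have exp : ∀ i ∈ Finset.range m,
        R₁ ^ (i + 1) * V * R₀ ^ (m - i)
          = R₀ ^ (i + 1) * V * R₀ ^ (m - (i + 1) + 1)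
            + (R₁ ^ (i + 1) - R₀ ^ (i + 1)) * V * R₀ ^ (m - (i + 1) + 1) := by
      intro i hi
      have hi' : i < m := Finset.mem_range.mp hi
      have : m - (i + 1) + 1 = m - i := by omega
      rw [this]; noncomm_ring
    have keym := key m
    rw [Finset.sum_congr rfl exp, Finset.sum_add_distrib] at keym
    -- split last term of second sum
    obtain ⟨n, rfl⟩ : ∃ n, m = n + 1 := ⟨m - 1, by omega⟩
    rw [Finset.sum_range_succ ((fun i => (R₁ ^ (i + 1) - R₀ ^ (i + 1)) * V * R₀ ^ (n + 1 - (i + 1) + 1)))] at keym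
    have hlast : (R₁ ^ (n + 1) - R₀ ^ (n + 1)) * V * R₀ ^ (n + 1 - (n + 1) + 1)
        = (R₁ ^ (n + 1) - R₀ ^ (n + 1)) * (V * R₀) := by
      simp [mul_assoc]
    rw [hlast] at keym
    rw [hIcc (fun l => R₀ ^ l * V * R₀ ^ (n + 1 - l + 1)) (n + 1),
        hIcc (fun l => (R₁ ^ l - R₀ ^ l) * V * R₀ ^ (n + 1 - l + 1)) (n + 1 - 1)]
    have hn1 : n + 1 - 1 = n := by omega
    rw [hn1]
    rw [mul_add, mul_one]
    nth_rewrite 1 [keym]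
    abel
  have := congrArg (· * Ring.inverse (1 + V * R₀)) main
  rw [mul_assoc, Ring.mul_inverse_cancel _ huVR, mul_one] at this
  rw [this, neg_mul]
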